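/- For the WENO-6 subdivision scheme, at odd indices of the first difference, |d(S_weno(f))_{2n+1}| ≤ (3/4)·max(sup_k |df_k|, sup_k |Df_k|), where d(S_weno(f))_{2n+1} = S_weno(f)_{2n+2} - S_weno(f)_{2n+1}. -/
import Mathlib


/-- First difference operator. -/
def d (f : ℤ → ℝ) (n : ℤ) : ℝ := f (n + 1) - f n

/-- Second difference operator. -/
def D (f : ℤ → ℝ) (n : ℤ) : ℝ := f (n + 1) - 2 * f n + f (n - 1)

/-- For the WENO-6 scheme, at odd indices of the first difference
`|d(S_weno f)_{2n+1}| = |S_weno(f)_{2n+2} - S_weno(f)_{2n+1}| = |f_{n+1} - S_weno(f)_{2n+1}|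
  ≤ (3/4)·max(⨆ k |df_k|, ⨆ k |Df_k|)`,
where `Sodd n = S_weno(f)_{2n+1}` and the convex weights may depend on `n`. -/
theorem weno6_d_odd (f : ℤ → ℝ) (hf : ∃ C, ∀ n, |f n| ≤ C)
    (a0 a1 a2 : ℤ → ℝ)
    (ha0 : ∀ n, 0 ≤ a0 n) (ha1 : ∀ n, 0 ≤ a1 n) (ha2 : ∀ n, 0 ≤ a2 n)
    (hsum : ∀ n, a0 n + a1 n + a2 n = 1)
    (Sodd : ℤ → ℝ)
    (hS : ∀ n, Sodd n = (f n + f (n + 1)) / 2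
        + (a0 n / 16) * D f (n + 2) - ((3 * a0 n + a1 n) / 16) * D f (n + 1)
        - ((a1 n + 3 * a2 n) / 16) * D f n + (a2 n / 16) * D f (n - 1))
    (n : ℤ) :
    |f (n + 1) - Sodd n| ≤ (3 / 4) * max (⨆ k, |d f k|) (⨆ k, |D f k|) := by
  obtain ⟨C, hC⟩ := hf
  have hbd : BddAbove (Set.range fun k => |d f k|) := by
    refine ⟨2 * C, ?_⟩
    rintro x ⟨k, rfl⟩
    have h1 := hC (k + 1); have h2 := hC k
    simp only [d]
    calc |f (k + 1) - f k| ≤ |f (k + 1)| + |f k| := abs_sub _ _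
      _ ≤ 2 * C := by linarith
  have hbD : BddAbove (Set.range fun k => |D f k|) := by
    refine ⟨4 * C, ?_⟩
    rintro x ⟨k, rfl⟩
    have h1 := hC (k + 1); have h2 := hC k; have h3 := hC (k - 1)
    have habs := abs_nonneg (f k)
    simp only [D]
    calc |f (k + 1) - 2 * f k + f (k - 1)| ≤ |f (k + 1) - 2 * f k| + |f (k - 1)| :=
          abs_add_le _ _
      _ ≤ |f (k + 1)| + |2 * f k| + |f (k - 1)| := by
          have := abs_sub (f (k + 1)) (2 * f k); linarith
      _ ≤ 4 * C := by rw [abs_mul]; simp; linarith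
  set M := max (⨆ k, |d f k|) (⨆ k, |D f k|) with hM
  have hdle : ∀ k, |d f k| ≤ M := fun k =>
    le_trans (le_ciSup hbd k) (le_max_left _ _)
  have hDle : ∀ k, |D f k| ≤ M := fun k =>
    le_trans (le_ciSup hbD k) (le_max_right _ _)
  have key : f (n + 1) - Sodd n = (d f n) / 2 - (a0 n / 16) * D f (n + 2)
      + ((3 * a0 n + a1 n) / 16) * D f (n + 1)
      + ((a1 n + 3 * a2 n) / 16) * D f n - (a2 n / 16) * D f (n - 1) := by
    rw [hS]; simp only [d]; ring
  rw [key, abs_le]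
  obtain ⟨h1l, h1r⟩ := abs_le.mp (hdle n)
  obtain ⟨h2l, h2r⟩ := abs_le.mp (hDle (n + 2))
  obtain ⟨h3l, h3r⟩ := abs_le.mp (hDle (n + 1))
  obtain ⟨h4l, h4r⟩ := abs_le.mp (hDle n)
  obtain ⟨h5l, h5r⟩ := abs_le.mp (hDle (n - 1))
  have hs := hsum n
  have hM0 : 0 ≤ M := le_trans (abs_nonneg _) (hdle n)
  have h1M := mul_nonneg (ha1 n) hM0
  constructor
  · nlinarith [mul_nonneg (ha0 n) (sub_nonneg.mpr h2r), mul_nonneg (ha0 n) (sub_nonneg.mpr h3l),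
      mul_nonneg (ha1 n) (sub_nonneg.mpr h3l), mul_nonneg (ha1 n) (sub_nonneg.mpr h4l),
      mul_nonneg (ha2 n) (sub_nonneg.mpr h4l), mul_nonneg (ha2 n) (sub_nonneg.mpr h5r)]
  · nlinarith [mul_nonneg (ha0 n) (sub_nonneg.mpr h2l), mul_nonneg (ha0 n) (sub_nonneg.mpr h3r),
      mul_nonneg (ha1 n) (sub_nonneg.mpr h3r), mul_nonneg (ha1 n) (sub_nonneg.mpr h4r),
      mul_nonneg (ha2 n) (sub_nonneg.mpr h4r), mul_nonneg (ha2 n) (sub_nonneg.mpr h5l)]
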